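/- arXiv:1307.0613 — 3 statements merged into one kernel-verified Lean document; each statement's English description precedes it below -/
import Mathlib

section
/- Let ω be a group word, and let G be an ω-maximal finite p-group such that ω is interchangeable in G. Then ω(G) ≤ Z(G). -/
/-- The subgroup generated by `n`-th powers of elements of `H`. -/
def powSubgroup {G : Type*} [Group G] (H : Subgroup G) (n : ℕ) : Subgroup G :=
  Subgroup.closure {x | ∃ h ∈ H, h ^ n = x}

/-- The verbal subgroup `ω(H)` of a subgroup `H ≤ G` for the word `w` in `n` variables:
the subgroup generated by all values of `w` on tuples of elements of `H`. -/
def verbal {G : Type*} [Group G] {n : ℕ} (w : FreeGroup (Fin n)) (H : Subgroup G) :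
    Subgroup G :=
  Subgroup.closure {x | ∃ f : Fin n → G, (∀ i, f i ∈ H) ∧ FreeGroup.lift f w = x}

/-- `G` is `ω`-maximal: every proper subgroup `H < G` satisfies `|H : ω(H)| < |G : ω(G)|`. -/
def IsOmegaMaximal {G : Type*} [Group G] {n : ℕ} (w : FreeGroup (Fin n)) : Prop :=
  ∀ H : Subgroup G, H < ⊤ → (verbal w H).relIndex H < (verbal w (⊤ : Subgroup G)).index

/-- `ω` is interchangeable in `G`: for every normal `N ⊴ G`,
`[ω(N),G] ≤ [N,ω(G)] ⬝ [ω(G),G]^p ⬝ [ω(G),G,G]`. -/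
def IsInterchangeable {G : Type*} [Group G] {n : ℕ} (w : FreeGroup (Fin n)) (p : ℕ) : Prop :=
  ∀ N : Subgroup G, N.Normal →
    ⁅verbal w N, (⊤ : Subgroup G)⁆ ≤
      ⁅N, verbal w (⊤ : Subgroup G)⁆ ⊔ powSubgroup ⁅verbal w (⊤ : Subgroup G), (⊤ : Subgroup G)⁆ p ⊔
        ⁅⁅verbal w (⊤ : Subgroup G), (⊤ : Subgroup G)⁆, (⊤ : Subgroup G)⁆

open scoped commutatorElement

section Aux
variable {G : Type*} [Group G] {n : ℕ} (w : FreeGroup (Fin n))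

variable {G : Type*} [Group G] {n : ℕ} (w : FreeGroup (Fin n))

lemma lift_mem {H : Subgroup G} {f : Fin n → G} (hf : ∀ i, f i ∈ H) :
    FreeGroup.lift f w ∈ H := by
  have key : H.subtype.comp (FreeGroup.lift (fun i => (⟨f i, hf i⟩ : H))) = FreeGroup.lift f := by
    apply FreeGroup.ext_hom
    intro a
    simp
  rw [← key]
  exact (FreeGroup.lift (fun i => (⟨f i, hf i⟩ : H)) w).2

lemma verbal_le_self (H : Subgroup G) : verbal w H ≤ H := by
  rw [verbal, Subgroup.closure_le]
  rintro x ⟨f, hf, rfl⟩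
  exact lift_mem w hf

lemma verbal_mono {H K : Subgroup G} (h : H ≤ K) : verbal w H ≤ verbal w K := by
  apply Subgroup.closure_mono
  rintro x ⟨f, hf, rfl⟩
  exact ⟨f, fun i => h (hf i), rfl⟩

lemma verbal_top_normal : (verbal w (⊤ : Subgroup G)).Normal := by
  constructor
  intro x hx g
  have : (MulAut.conj g).toMonoidHom '' {x | ∃ f : Fin n → G, (∀ i, f i ∈ (⊤:Subgroup G)) ∧ FreeGroup.lift f w = x}
      ⊆ {x | ∃ f : Fin n → G, (∀ i, f i ∈ (⊤:Subgroup G)) ∧ FreeGroup.lift f w = x} := by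
    rintro y ⟨x', ⟨f, hf, rfl⟩, rfl⟩
    refine ⟨fun i => g * f i * g⁻¹, fun i => trivial, ?_⟩
    have : FreeGroup.lift (fun i => g * f i * g⁻¹) =
        (MulAut.conj g).toMonoidHom.comp (FreeGroup.lift f) := by
      apply FreeGroup.ext_hom; intro a; simp
    rw [this]; rfl
  have h2 : g * x * g⁻¹ ∈ Subgroup.map (MulAut.conj g).toMonoidHom (verbal w ⊤) :=
    ⟨x, hx, rfl⟩
  rw [verbal, MonoidHom.map_closure] at h2
  exact Subgroup.closure_mono this h2

lemma powSubgroup_le {H K : Subgroup G} (n : ℕ) (h : ∀ x ∈ H, x ^ n ∈ K) :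
    powSubgroup H n ≤ K := by
  rw [powSubgroup, Subgroup.closure_le]
  rintro x ⟨y, hy, rfl⟩
  exact h y hy


end Aux

lemma powSubgroup_normal {G : Type*} [Group G] (K : Subgroup G) [hN : K.Normal] (m : ℕ) :
    (powSubgroup K m).Normal := by
  constructor
  intro x hx g
  induction hx using Subgroup.closure_induction with
  | mem y hy =>
    obtain ⟨h, hh, rfl⟩ := hy
    have : g * h ^ m * g⁻¹ = (g * h * g⁻¹) ^ m := by
      rw [conj_pow]
    rw [this]
    exact Subgroup.subset_closure ⟨g * h * g⁻¹, hN.conj_mem h hh g, rfl⟩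
  | one => simpa using one_mem (powSubgroup K m)
  | mul y z _ _ hy hz =>
    have : g * (y * z) * g⁻¹ = (g * y * g⁻¹) * (g * z * g⁻¹) := by group
    rw [this]
    exact mul_mem hy hz
  | inv y _ hy =>
    have : g * y⁻¹ * g⁻¹ = (g * y * g⁻¹)⁻¹ := by group
    rw [this]
    exact inv_mem hy


lemma not_le_frattini {G : Type*} [Group G] [Finite G] {p : ℕ} (hp : p.Prime)
    (hG : IsPGroup p G) (K : Subgroup G) [hN : K.Normal] (hK : K ≠ ⊥) :
    ¬ K ≤ ⁅K, (⊤ : Subgroup G)⁆ ⊔ powSubgroup K p := by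
  classical
  have : Fact p.Prime := ⟨hp⟩
  have hnil : Group.IsNilpotent G := hG.isNilpotent
  obtain ⟨nn, hnn⟩ := hnil.nilpotent
  have hKi : ∃ i, K ≤ Subgroup.upperCentralSeries G i := ⟨nn, by rw [hnn]; exact le_top⟩
  set i := Nat.find hKi with hidef
  have hi : K ≤ Subgroup.upperCentralSeries G i := Nat.find_spec hKi
  have hi0 : i ≠ 0 := by
    intro h
    rw [h, Subgroup.upperCentralSeries_zero] at hi
    exact hK (le_bot_iff.mp hi)
  obtain ⟨j, hj⟩ := Nat.exists_eq_succ_of_ne_zero hi0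
  have hcomm : ⁅K, (⊤ : Subgroup G)⁆ ≤ Subgroup.upperCentralSeries G j := by
    rw [Subgroup.commutator_le]
    intro k hk g _
    have := hi hk
    rw [hj] at this
    exact (Subgroup.mem_upperCentralSeries_succ_iff).mp this g
  have hlt : ¬ K ≤ Subgroup.upperCentralSeries G j := by
    have := Nat.find_min hKi (m := j) (by omega)
    exact this
  have hK₁K : ⁅K, (⊤ : Subgroup G)⁆ ≤ K := Subgroup.commutator_le_left K ⊤
  have hK₁ne : ⁅K, (⊤ : Subgroup G)⁆ < K := by
    rcases lt_or_eq_of_le hK₁K with h | h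
    · exact h
    · exact absurd (h ▸ hcomm) hlt
  intro hle
  -- quotient of K by [K,G]
  haveI : (⁅K, (⊤ : Subgroup G)⁆.subgroupOf K).Normal :=
    (Subgroup.commutator_normal K ⊤).subgroupOf K
  set Q := ↥K ⧸ (⁅K, (⊤ : Subgroup G)⁆.subgroupOf K) with hQdef
  letI : CommGroup Q :=
    { (inferInstance : Group Q) with
      mul_comm := by
        intro a b
        induction a using QuotientGroup.induction_on with | H x =>
        induction b using QuotientGroup.induction_on with | H y =>
        rw [← QuotientGroup.mk_mul, ← QuotientGroup.mk_mul, QuotientGroup.eq]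
        rw [Subgroup.mem_subgroupOf]
        have hcoe : (((x * y)⁻¹ * (y * x) : ↥K) : G) = ⁅((y : G))⁻¹, ((x : G))⁻¹⁆ := by
          rw [commutatorElement_def]
          push_cast
          group
        rw [hcoe]
        exact Subgroup.commutator_mem_commutator (inv_mem y.2) (Subgroup.mem_top _) }
  set π := powMonoidHom (α := Q) p with hπdef
  have hsup : ⁅K, (⊤ : Subgroup G)⁆ ⊔ powSubgroup K p =
      Subgroup.closure (((⁅K, (⊤ : Subgroup G)⁆ : Subgroup G) : Set G) ∪ {x | ∃ h ∈ K, h ^ p = x}) := by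
    rw [Subgroup.closure_union, Subgroup.closure_eq, powSubgroup]
  have claim : ∀ x ∈ ⁅K, (⊤ : Subgroup G)⁆ ⊔ powSubgroup K p,
      ∃ hx : x ∈ K, (QuotientGroup.mk (⟨x, hx⟩ : ↥K) : Q) ∈ π.range := by
    rw [hsup]
    intro x hx
    induction hx using Subgroup.closure_induction with
    | mem x hx =>
      rcases hx with hx | ⟨h, hh, rfl⟩
      · refine ⟨hK₁K hx, ?_⟩
        have : (QuotientGroup.mk (⟨x, hK₁K hx⟩ : ↥K) : Q) = 1 := by
          rw [QuotientGroup.eq_one_iff, Subgroup.mem_subgroupOf]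
          exact hx
        rw [this]; exact one_mem _
      · refine ⟨pow_mem hh p, ?_⟩
        refine ⟨QuotientGroup.mk (⟨h, hh⟩ : ↥K), ?_⟩
        have : (⟨h ^ p, pow_mem hh p⟩ : ↥K) = (⟨h, hh⟩ : ↥K) ^ p := by
          ext; push_cast; rfl
        rw [hπdef]
        show (QuotientGroup.mk (⟨h, hh⟩ : ↥K) : Q) ^ p = _
        rw [this, QuotientGroup.mk_pow]
    | one =>
      refine ⟨one_mem K, ?_⟩
      have h1 : (QuotientGroup.mk (⟨1, one_mem K⟩ : ↥K) : Q) = 1 := by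
        rw [show ((⟨1, one_mem K⟩ : ↥K)) = 1 from rfl, QuotientGroup.mk_one]
      rw [h1]
      exact one_mem _
    | mul x y _ _ hx hy =>
      obtain ⟨hxK, hxr⟩ := hx
      obtain ⟨hyK, hyr⟩ := hy
      refine ⟨mul_mem hxK hyK, ?_⟩
      have : (⟨x * y, mul_mem hxK hyK⟩ : ↥K) = ⟨x, hxK⟩ * ⟨y, hyK⟩ := rfl
      rw [this, QuotientGroup.mk_mul]
      exact mul_mem hxr hyr
    | inv x _ hx =>
      obtain ⟨hxK, hxr⟩ := hx
      refine ⟨inv_mem hxK, ?_⟩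
      have : (⟨x⁻¹, inv_mem hxK⟩ : ↥K) = (⟨x, hxK⟩ : ↥K)⁻¹ := rfl
      rw [this, QuotientGroup.mk_inv]
      exact inv_mem hxr
  have hsurj : Function.Surjective π := by
    intro q
    induction q using QuotientGroup.induction_on with | H k =>
    obtain ⟨hx, hr⟩ := claim (↑k) (hle k.2)
    have : (⟨(k : G), hx⟩ : ↥K) = k := Subtype.ext rfl
    rw [this] at hr
    exact hr
  have hinj : Function.Injective π := (Finite.injective_iff_surjective).mpr hsurj
  -- now derive contradiction
  obtain ⟨k₀, hk₀K, hk₀⟩ := SetLike.exists_of_lt hK₁ne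
  set q₀ : Q := QuotientGroup.mk (⟨k₀, hk₀K⟩ : ↥K) with hq₀
  have hq₀ne : q₀ ≠ 1 := by
    rw [hq₀, Ne, QuotientGroup.eq_one_iff, Subgroup.mem_subgroupOf]
    exact hk₀
  have hQp : IsPGroup p Q := (hG.to_subgroup K).to_quotient _
  obtain ⟨m, hm⟩ := hQp q₀
  have hinjm : ∀ m : ℕ, Function.Injective (fun q : Q => q ^ p ^ m) := by
    intro m
    induction m with
    | zero => simp only [pow_zero, pow_one]; exact fun a b h => h
    | succ m ih =>
      have heq : (fun q : Q => q ^ p ^ (m + 1)) = (fun q : Q => q ^ p) ∘ (fun q : Q => q ^ p ^ m) := by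
        funext q
        simp [Function.comp, ← pow_mul, pow_succ]
      rw [heq]
      exact Function.Injective.comp (f := fun q : Q => q ^ p ^ m) hinj ih
  exact hq₀ne (hinjm m (by simpa using hm))

lemma pairing_index_le {G H : Type*} [Group G] [Group H] [Finite G] [Finite H] {p : ℕ}
    (hp : p.Prime) (φ : H → G →* Multiplicative (ZMod p)) (ψ : G → H →* Multiplicative (ZMod p))
    (hcompat : ∀ g h, φ h g = ψ g h) :
    (⨅ h : H, (φ h).ker).index ≤ (⨅ g : G, (ψ g).ker).index := by
  classical
  haveI : Fact p.Prime := ⟨hp⟩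
  haveI : NeZero p := ⟨hp.ne_zero⟩
  haveI := Fintype.ofFinite H
  set C := ⨅ h : H, (φ h).ker with hC
  set D := ⨅ g : G, (ψ g).ker with hD
  have hEx : ∃ m, ∃ T : Finset H, (⨅ h ∈ T, (φ h).ker) = C ∧ T.card = m := by
    refine ⟨(Finset.univ : Finset H).card, Finset.univ, ?_, rfl⟩
    simp [hC]
  obtain ⟨T, hT, hTcard⟩ := Nat.find_spec hEx
  -- cardinality of Multiplicative (ZMod p)
  have hcardM : Nat.card (Multiplicative (ZMod p)) = p := by
    rw [Nat.card_congr (Multiplicative.toAdd (α := ZMod p)), Nat.card_zmod]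
  -- minimality key
  have key : ∀ v ∈ T, ∃ g : G, (∀ u ∈ T.erase v, g ∈ (φ u).ker) ∧ φ v g ≠ 1 := by
    intro v hv
    by_contra hcon
    push_neg at hcon
    have herase : (⨅ u ∈ T.erase v, (φ u).ker) = C := by
      apply le_antisymm
      · rw [← hT]
        refine le_iInf fun u => le_iInf fun hu => ?_
        by_cases hueq : u = v
        · subst hueq
          intro x hx
          have hx' : ∀ u' ∈ T.erase u, x ∈ (φ u').ker := by
            intro u' hu'
            exact Subgroup.mem_iInf.mp (Subgroup.mem_iInf.mp hx u') hu'
          exact hcon x hx'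
        · exact iInf₂_le u (Finset.mem_erase.mpr ⟨hueq, hu⟩)
      · rw [← hT]
        exact le_iInf fun u => le_iInf fun hu => iInf₂_le u (Finset.mem_of_mem_erase hu)
    have hcard : (T.erase v).card < Nat.find hEx := by
      rw [← hTcard]
      exact Finset.card_erase_lt_of_mem hv
    exact Nat.find_min hEx hcard ⟨T.erase v, herase, rfl⟩
  -- selection
  set TT := {x : H // x ∈ T}
  have gsel : ∀ v : TT, ∃ g : G, (∀ u ∈ T.erase v.1, g ∈ (φ u).ker) ∧ φ v.1 g ≠ 1 :=
    fun v => key v.1 v.2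
  choose g hg1 hg2 using gsel
  -- the product homomorphism
  set Ψ : H →* (TT → Multiplicative (ZMod p)) :=
    { toFun := fun u v => ψ (g v) u
      map_one' := by funext v; simp
      map_mul' := by intro a b; funext v; simp } with hΨ
  -- C.index ≤ p ^ T.card
  have hkerle : ∀ u : H, ((φ u).ker).index ≤ p := by
    intro u
    rw [Subgroup.index_ker]
    calc Nat.card ↥(φ u).range ≤ Nat.card (Multiplicative (ZMod p)) :=
          Nat.card_le_card_of_injective _ Subtype.val_injective
      _ = p := hcardM
  have step1 : ∀ S : Finset H, (⨅ u ∈ S, (φ u).ker).index ≤ p ^ S.card := by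
    intro S
    induction S using Finset.induction with
    | empty => simp [Subgroup.index_top]
    | @insert a s ha ih =>
      rw [Finset.iInf_insert, Finset.card_insert_of_notMem ha]
      calc ((φ a).ker ⊓ ⨅ u ∈ s, (φ u).ker).index
          ≤ ((φ a).ker).index * (⨅ u ∈ s, (φ u).ker).index := Subgroup.index_inf_le
        _ ≤ p * p ^ s.card := Nat.mul_le_mul (hkerle a) ih
        _ = p ^ (s.card + 1) := by ring
  have hCle : C.index ≤ p ^ T.card := by
    rw [← hT]; exact step1 T
  -- D ≤ ker Ψ
  have hDker : D ≤ Ψ.ker := by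
    intro u hu
    rw [MonoidHom.mem_ker]
    funext v
    exact Subgroup.mem_iInf.mp hu (g v)
  -- Ψ (v) = mulSingle v (φ v (g v))
  have hΨv : ∀ v : TT, Ψ v.1 = Pi.mulSingle v (φ v.1 (g v)) := by
    intro v
    funext v'
    by_cases h : v' = v
    · subst h
      rw [Pi.mulSingle_apply, if_pos rfl]
      exact (hcompat (g v') v'.1).symm
    · rw [Pi.mulSingle_apply, if_neg h]
      have hmem : (v : H) ∈ T.erase v'.1 :=
        Finset.mem_erase.mpr ⟨fun hvv => h (Subtype.ext hvv).symm, v.2⟩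
      have h1 : φ (v : H) (g v') = 1 := hg1 v' (v : H) hmem
      calc Ψ (v : H) v' = ψ (g v') (v : H) := rfl
        _ = φ (v : H) (g v') := (hcompat _ _).symm
        _ = 1 := h1
  -- range Ψ = ⊤
  have hrange : Ψ.range = ⊤ := by
    rw [eq_top_iff]
    intro f _
    rw [← Finset.univ_prod_mulSingle f]
    apply Subgroup.prod_mem
    intro v _
    -- mulSingle v (f v) is a zpower of mulSingle v c₀
    set c₀ := φ v.1 (g v) with hc₀
    have hc₀ne : Multiplicative.toAdd c₀ ≠ 0 := by
      intro h
      apply hg2 v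
      have hco : c₀ = 1 := by rw [← ofAdd_toAdd c₀, h, ofAdd_zero]
      rw [hc₀] at hco
      exact hco
    set a₀ : ZMod p := Multiplicative.toAdd c₀
    set a : ZMod p := Multiplicative.toAdd (f v)
    set nn : ℤ := ((a * a₀⁻¹).val : ℤ) with hnn
    have hzc : c₀ ^ nn = f v := by
      have : Multiplicative.toAdd (c₀ ^ nn) = a := by
        rw [toAdd_zpow]
        show nn • a₀ = a
        rw [zsmul_eq_mul, hnn]
        push_cast
        rw [ZMod.natCast_val, ZMod.cast_id]
        field_simp
      exact Multiplicative.toAdd.injective this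
    have hsingle : Pi.mulSingle v (f v) = (Pi.mulSingle v c₀ : TT → Multiplicative (ZMod p)) ^ nn := by
      funext v'
      rw [Pi.pow_apply]
      by_cases h : v' = v
      · subst h; rw [Pi.mulSingle_eq_same, Pi.mulSingle_eq_same, hzc]
      · rw [Pi.mulSingle_eq_of_ne h, Pi.mulSingle_eq_of_ne h, one_zpow]
    rw [hsingle, ← hΨv v]
    exact zpow_mem (MonoidHom.mem_range.mpr ⟨(v : H), rfl⟩) nn
  -- index of ker Ψ
  have hkerΨ : Ψ.ker.index = p ^ T.card := by
    rw [Subgroup.index_ker, hrange]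
    have : Nat.card ↥(⊤ : Subgroup (TT → Multiplicative (ZMod p)))
        = Nat.card (TT → Multiplicative (ZMod p)) := by
      rw [Subgroup.card_top]
    rw [this, Nat.card_pi]
    simp [hcardM, Finset.card_univ]
    rw [Fintype.card_coe]
  -- conclude
  have hfin : D.index ≠ 0 := Subgroup.index_ne_zero_of_finite
  have hdvd : Ψ.ker.index ∣ D.index := Subgroup.index_dvd_of_le hDker
  calc C.index ≤ p ^ T.card := hCle
    _ = Ψ.ker.index := hkerΨ.symm
    _ ≤ D.index := Nat.le_of_dvd (Nat.pos_of_ne_zero hfin) hdvd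

lemma exists_hom_ne_one {B : Type*} [CommGroup B] [Finite B] {p : ℕ} (hp : p.Prime)
    (hB : ∀ x : B, x ^ p = 1) {a₀ : B} (ha : a₀ ≠ 1) :
    ∃ f : B →* Multiplicative (ZMod p), f a₀ ≠ 1 := by
  classical
  haveI : Fact p.Prime := ⟨hp⟩
  set S : Set (Subgroup B) := {M : Subgroup B | a₀ ∉ M} with hS
  have hSne : S.Nonempty := ⟨⊥, by simp [hS, ha]⟩
  obtain ⟨M, hMS, hMmax⟩ := Set.Finite.exists_maximalFor id S (Set.toFinite S) hSne
  set Q := B ⧸ M with hQ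
  set abar : Q := QuotientGroup.mk a₀ with habar
  have hane : abar ≠ 1 := by
    rw [habar, Ne, QuotientGroup.eq_one_iff]
    exact hMS
  have hQexp : ∀ q : Q, q ^ p = 1 := by
    intro q
    induction q using QuotientGroup.induction_on with | H x =>
    rw [← QuotientGroup.mk_pow, hB x, QuotientGroup.mk_one]
  have hgen : ∀ q : Q, q ∈ Subgroup.zpowers abar := by
    intro q
    by_cases hq : q = 1
    · rw [hq]; exact one_mem _
    induction q using QuotientGroup.induction_on with | H x =>
    have hx : x ∉ M := fun h => hq (QuotientGroup.eq_one_iff x |>.mpr h)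
    have h1 : a₀ ∈ M ⊔ Subgroup.zpowers x := by
      by_contra hcon
      have hmem : M ⊔ Subgroup.zpowers x ∈ S := hcon
      have heq := hMmax hmem le_sup_left
      simp only [id] at heq
      apply hx
      have : x ∈ M ⊔ Subgroup.zpowers x := Subgroup.mem_sup_right (Subgroup.mem_zpowers x)
      exact heq this
    have h2 : abar ∈ Subgroup.map (QuotientGroup.mk' M) (M ⊔ Subgroup.zpowers x) :=
      ⟨a₀, h1, rfl⟩
    rw [Subgroup.map_sup, QuotientGroup.map_mk'_self, bot_sup_eq,
      MonoidHom.map_zpowers] at h2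
    have hordq : orderOf ((QuotientGroup.mk' M) x) = p :=
      orderOf_eq_prime (hQexp _) (by
        intro h
        exact hq h)
    have hordabar : orderOf abar = p := orderOf_eq_prime (hQexp _) hane
    have hle : Subgroup.zpowers abar ≤ Subgroup.zpowers ((QuotientGroup.mk' M) x) :=
      Subgroup.zpowers_le.mpr h2
    have heq : Subgroup.zpowers abar = Subgroup.zpowers ((QuotientGroup.mk' M) x) :=
      Subgroup.eq_of_le_of_card_ge hle (by rw [Nat.card_zpowers, Nat.card_zpowers, hordq, hordabar])
    rw [heq]
    exact Subgroup.mem_zpowers _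
  have hQcyc : IsCyclic Q := ⟨⟨abar, hgen⟩⟩
  have hcard : Nat.card Q = p := by
    have htop : Subgroup.zpowers abar = ⊤ := by
      rw [eq_top_iff]
      exact fun q _ => hgen q
    have h1 : Nat.card (Subgroup.zpowers abar) = p := by
      rw [Nat.card_zpowers]
      exact orderOf_eq_prime (hQexp _) hane
    rw [← h1, htop]
    exact Subgroup.card_top.symm
  subst hcard
  refine ⟨(zmodCyclicMulEquiv hQcyc).symm.toMonoidHom.comp (QuotientGroup.mk' M), ?_⟩
  intro h
  apply hane
  have : (zmodCyclicMulEquiv hQcyc).symm abar = (zmodCyclicMulEquiv hQcyc).symm 1 := by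
    rw [map_one]
    exact h
  exact (zmodCyclicMulEquiv hQcyc).symm.injective this

lemma exists_character {G : Type*} [Group G] [Finite G] {p : ℕ} (hp : p.Prime)
    (K L : Subgroup G) (hLn : (L.subgroupOf K).Normal)
    (hpow : ∀ x ∈ K, x ^ p ∈ L) (hKL : ¬ K ≤ L)
    (hcommKK : ∀ x y : ↥K, (⁅(x : G), (y : G)⁆) ∈ L) :
    ∃ χ : ↥K →* Multiplicative (ZMod p),
      (∀ (x : G) (hx : x ∈ K), x ∈ L → χ ⟨x, hx⟩ = 1) ∧ ∃ k : ↥K, χ k ≠ 1 := by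
  classical
  haveI := hLn
  set A := ↥K ⧸ L.subgroupOf K with hA
  letI : CommGroup A :=
    { (inferInstance : Group A) with
      mul_comm := by
        intro a b
        induction a using QuotientGroup.induction_on with | H x =>
        induction b using QuotientGroup.induction_on with | H y =>
        rw [← QuotientGroup.mk_mul, ← QuotientGroup.mk_mul, QuotientGroup.eq]
        rw [Subgroup.mem_subgroupOf]
        have hcoe : (((x * y)⁻¹ * (y * x) : ↥K) : G) = ⁅((y : G))⁻¹, ((x : G))⁻¹⁆ := by
          rw [commutatorElement_def]
          push_cast
          group
        rw [hcoe]
        exact hcommKK y⁻¹ x⁻¹ }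
  have hApow : ∀ a : A, a ^ p = 1 := by
    intro a
    induction a using QuotientGroup.induction_on with | H k =>
    rw [← QuotientGroup.mk_pow, QuotientGroup.eq_one_iff, Subgroup.mem_subgroupOf]
    push_cast
    exact hpow (k : G) k.2
  have hex : ∃ x ∈ K, x ∉ L := by
    by_contra h
    push_neg at h
    exact hKL h
  obtain ⟨k₀, hk₀K, hk₀L⟩ := hex
  set a₀ : A := QuotientGroup.mk (⟨k₀, hk₀K⟩ : ↥K) with ha₀
  have ha₀ne : a₀ ≠ 1 := by
    rw [ha₀, Ne, QuotientGroup.eq_one_iff, Subgroup.mem_subgroupOf]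
    exact hk₀L
  obtain ⟨f, hf⟩ := exists_hom_ne_one hp hApow ha₀ne
  refine ⟨f.comp (QuotientGroup.mk' (L.subgroupOf K)), ?_, ?_⟩
  · intro x hx hxL
    have h1 : (QuotientGroup.mk' (L.subgroupOf K)) (⟨x, hx⟩ : ↥K) = 1 := by
      rw [QuotientGroup.mk'_apply, QuotientGroup.eq_one_iff, Subgroup.mem_subgroupOf]
      exact hxL
    rw [MonoidHom.comp_apply, h1, map_one]
  · exact ⟨⟨k₀, hk₀K⟩, hf⟩

/-- **Theorem 2.** If `G` is an `ω`-maximal finite `p`-group and `ω` is interchangeable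
in `G`, then `ω(G) ≤ Z(G)`. -/
theorem verbal_le_center_of_omegaMaximal {G : Type*} [Group G] [Finite G] {p : ℕ}
    (hp : p.Prime) (hG : IsPGroup p G) {n : ℕ} (w : FreeGroup (Fin n))
    (hmax : IsOmegaMaximal (G := G) w) (hint : IsInterchangeable (G := G) w p) :
    verbal w (⊤ : Subgroup G) ≤ Subgroup.center G := by
  classical
  by_contra hcon
  set W := verbal w (⊤ : Subgroup G) with hWdef
  haveI hWn : W.Normal := verbal_top_normal w
  set K := ⁅W, (⊤ : Subgroup G)⁆ with hKdef
  haveI hKn : K.Normal := Subgroup.commutator_normal W ⊤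
  have hKne : K ≠ ⊥ := by
    intro h
    apply hcon
    intro x hx
    rw [Subgroup.mem_center_iff]
    intro g
    have hxg : ⁅x, g⁆ ∈ K := Subgroup.commutator_mem_commutator hx (Subgroup.mem_top g)
    rw [h, Subgroup.mem_bot] at hxg
    exact (commutatorElement_eq_one_iff_mul_comm.mp hxg).symm
  set L := ⁅K, (⊤ : Subgroup G)⁆ ⊔ powSubgroup K p with hLdef
  haveI : (powSubgroup K p).Normal := powSubgroup_normal K p
  haveI hLn' : L.Normal := Subgroup.sup_normal _ _
  have hLK : L ≤ K :=
    sup_le (Subgroup.commutator_le_left K ⊤) (powSubgroup_le p fun x hx => pow_mem hx p)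
  have hKL : ¬ K ≤ L := not_le_frattini hp hG K hKne
  obtain ⟨χ, hχL, k₀, hχk₀⟩ := exists_character hp K L (hLn'.subgroupOf K)
    (fun x hx => Subgroup.mem_sup_right (Subgroup.subset_closure ⟨x, hx, rfl⟩))
    hKL
    (fun x y => Subgroup.mem_sup_left (Subgroup.commutator_mem_commutator x.2 (Subgroup.mem_top _)))
  have hmemK : ∀ (g u : G), u ∈ W → ⁅g, u⁆ ∈ K := by
    intro g u hu
    rw [hKdef, Subgroup.commutator_comm]
    exact Subgroup.commutator_mem_commutator (Subgroup.mem_top g) hu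
  have hχconj : ∀ (x : G) (hx : x ∈ K) (g : G) (hgx : g * x * g⁻¹ ∈ K),
      χ ⟨g * x * g⁻¹, hgx⟩ = χ ⟨x, hx⟩ := by
    intro x hx g hgx
    have hgxL : ⁅g, x⁆ ∈ L := by
      apply Subgroup.mem_sup_left
      rw [Subgroup.commutator_comm]
      exact Subgroup.commutator_mem_commutator (Subgroup.mem_top g) hx
    have hgxK : ⁅g, x⁆ ∈ K := hLK hgxL
    have hsplit : (⟨g * x * g⁻¹, hgx⟩ : ↥K) = ⟨⁅g, x⁆, hgxK⟩ * ⟨x, hx⟩ := by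
      apply Subtype.ext
      show g * x * g⁻¹ = ⁅g, x⁆ * x
      rw [commutatorElement_def]
      group
    rw [hsplit, map_mul, hχL _ _ hgxL, one_mul]
  set φ : ↥W → G →* Multiplicative (ZMod p) := fun u =>
    { toFun := fun g => χ ⟨⁅g, (u : G)⁆, hmemK g u u.2⟩
      map_one' := by
        show χ ⟨⁅(1 : G), (u : G)⁆, hmemK 1 u u.2⟩ = 1
        have h1 : (⟨⁅(1 : G), (u : G)⁆, hmemK 1 u u.2⟩ : ↥K) = 1 := by
          apply Subtype.ext
          show ⁅(1 : G), (u : G)⁆ = 1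
          rw [commutatorElement_def]
          group
        rw [h1, map_one]
      map_mul' := by
        intro g h
        show χ ⟨⁅g * h, (u : G)⁆, hmemK (g * h) u u.2⟩
          = χ ⟨⁅g, (u : G)⁆, hmemK g u u.2⟩ * χ ⟨⁅h, (u : G)⁆, hmemK h u u.2⟩
        have hmem1 : g * ⁅h, (u : G)⁆ * g⁻¹ ∈ K := hKn.conj_mem _ (hmemK h u u.2) g
        have hsplit : (⟨⁅g * h, (u : G)⁆, hmemK (g * h) u u.2⟩ : ↥K)
            = ⟨g * ⁅h, (u : G)⁆ * g⁻¹, hmem1⟩ * ⟨⁅g, (u : G)⁆, hmemK g u u.2⟩ := by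
          apply Subtype.ext
          show ⁅g * h, (u : G)⁆ = (g * ⁅h, (u : G)⁆ * g⁻¹) * ⁅g, (u : G)⁆
          rw [commutatorElement_def, commutatorElement_def, commutatorElement_def]
          group
        rw [hsplit, map_mul, hχconj _ (hmemK h u u.2) g hmem1]
        exact mul_comm _ _ } with hφdef
  set ψ : G → ↥W →* Multiplicative (ZMod p) := fun g =>
    { toFun := fun u => χ ⟨⁅g, (u : G)⁆, hmemK g u u.2⟩
      map_one' := by
        show χ ⟨⁅g, ((1 : ↥W) : G)⁆, hmemK g _ (1 : ↥W).2⟩ = 1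
        have h1 : (⟨⁅g, ((1 : ↥W) : G)⁆, hmemK g _ (1 : ↥W).2⟩ : ↥K) = 1 := by
          apply Subtype.ext
          show ⁅g, ((1 : ↥W) : G)⁆ = 1
          rw [commutatorElement_def]
          push_cast
          group
        rw [h1, map_one]
      map_mul' := by
        intro u v
        show χ ⟨⁅g, ((u * v : ↥W) : G)⁆, hmemK g _ (u * v).2⟩
          = χ ⟨⁅g, (u : G)⁆, hmemK g u u.2⟩ * χ ⟨⁅g, (v : G)⁆, hmemK g v v.2⟩
        have hmem1 : (u : G) * ⁅g, (v : G)⁆ * (u : G)⁻¹ ∈ K :=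
          hKn.conj_mem _ (hmemK g v v.2) (u : G)
        have hsplit : (⟨⁅g, ((u * v : ↥W) : G)⁆, hmemK g _ (u * v).2⟩ : ↥K)
            = ⟨⁅g, (u : G)⁆, hmemK g u u.2⟩ * ⟨(u : G) * ⁅g, (v : G)⁆ * (u : G)⁻¹, hmem1⟩ := by
          apply Subtype.ext
          show ⁅g, (u : G) * (v : G)⁆ = ⁅g, (u : G)⁆ * ((u : G) * ⁅g, (v : G)⁆ * (u : G)⁻¹)
          rw [commutatorElement_def, commutatorElement_def, commutatorElement_def]
          group
        rw [hsplit, map_mul, hχconj _ (hmemK g v v.2) (u : G) hmem1] } with hψdef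
  have hcompat : ∀ (g : G) (u : ↥W), φ u g = ψ g u := fun _ _ => rfl
  set C := ⨅ u : ↥W, (φ u).ker with hCdef
  have hCmem : ∀ x : G, x ∈ C ↔ ∀ u : ↥W, χ ⟨⁅x, (u : G)⁆, hmemK x u u.2⟩ = 1 := by
    intro x
    rw [Subgroup.mem_iInf]
    constructor
    · intro h u
      exact MonoidHom.mem_ker.mp (h u)
    · intro h u
      exact MonoidHom.mem_ker.mpr (h u)
  haveI hCn : C.Normal := by
    constructor
    intro x hx g
    rw [Subgroup.mem_iInf] at hx ⊢
    intro u
    rw [MonoidHom.mem_ker]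
    have h1 : φ u (g * x * g⁻¹) = φ u x := by
      rw [map_mul, map_mul, map_inv]
      exact mul_inv_cancel_comm _ _
    rw [h1]
    exact MonoidHom.mem_ker.mp (hx u)
  have hCne : C ≠ ⊤ := by
    intro htop
    apply hχk₀
    have hgen : ∀ x : G, x ∈ K → ∃ hx : x ∈ K, χ ⟨x, hx⟩ = 1 := by
      intro x hx
      rw [hKdef, Subgroup.commutator_def] at hx
      induction hx using Subgroup.closure_induction with
      | mem y hy =>
        obtain ⟨u, hu, g, -, rfl⟩ := hy
        have hyK : ⁅u, g⁆ ∈ K := Subgroup.commutator_mem_commutator hu (Subgroup.mem_top g)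
        refine ⟨hyK, ?_⟩
        have hgC : g ∈ C := by rw [htop]; trivial
        have hval : χ ⟨⁅g, u⁆, hmemK g u hu⟩ = 1 := (hCmem g).mp hgC ⟨u, hu⟩
        have hco : (⟨⁅u, g⁆, hyK⟩ : ↥K) = (⟨⁅g, u⁆, hmemK g u hu⟩ : ↥K)⁻¹ := by
          apply Subtype.ext
          show ⁅u, g⁆ = ⁅g, u⁆⁻¹
          rw [commutatorElement_inv]
        rw [hco, map_inv, hval, inv_one]
      | one => exact ⟨one_mem K, by rw [show ((⟨1, one_mem K⟩ : ↥K)) = 1 from rfl, map_one]⟩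
      | mul y z _ _ hy hz =>
        obtain ⟨hyK, hyv⟩ := hy
        obtain ⟨hzK, hzv⟩ := hz
        refine ⟨mul_mem hyK hzK, ?_⟩
        have : (⟨y * z, mul_mem hyK hzK⟩ : ↥K) = ⟨y, hyK⟩ * ⟨z, hzK⟩ := rfl
        rw [this, map_mul, hyv, hzv, one_mul]
      | inv y _ hy =>
        obtain ⟨hyK, hyv⟩ := hy
        refine ⟨inv_mem hyK, ?_⟩
        have : (⟨y⁻¹, inv_mem hyK⟩ : ↥K) = (⟨y, hyK⟩ : ↥K)⁻¹ := rfl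
        rw [this, map_inv, hyv, inv_one]
    obtain ⟨hx', hval⟩ := hgen (k₀ : G) k₀.2
    exact hval
  have hCP : C < ⊤ := lt_top_iff_ne_top.mpr hCne
  have h1 := hmax C hCP
  have hvC_C : verbal w C ≤ C := verbal_le_self w C
  have hvC_W : verbal w C ≤ W := verbal_mono w le_top
  have e1 := Subgroup.relIndex_mul_index hvC_C
  have e2 := Subgroup.relIndex_mul_index hvC_W
  have hWidx : W.index ≠ 0 := Subgroup.index_ne_zero_of_finite
  have hCidx : C.index ≠ 0 := Subgroup.index_ne_zero_of_finite
  have h2 : (verbal w C).relIndex W < C.index := by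
    have hlt : (verbal w C).relIndex W * W.index < C.index * W.index := by
      rw [e2, ← e1]
      calc (verbal w C).relIndex C * C.index < W.index * C.index :=
            (Nat.mul_lt_mul_right (Nat.pos_of_ne_zero hCidx)).mpr h1
        _ = C.index * W.index := Nat.mul_comm _ _
    exact (Nat.mul_lt_mul_right (Nat.pos_of_ne_zero hWidx)).mp hlt
  set Mful := Subgroup.map K.subtype χ.ker with hMdef
  have hMmem : ∀ x : G, x ∈ Mful → ∃ hx : x ∈ K, χ ⟨x, hx⟩ = 1 := by
    rintro x ⟨k, hk, rfl⟩
    exact ⟨k.2, MonoidHom.mem_ker.mp hk⟩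
  have hMofval : ∀ (x : G) (hx : x ∈ K), χ ⟨x, hx⟩ = 1 → x ∈ Mful :=
    fun x hx h => ⟨⟨x, hx⟩, MonoidHom.mem_ker.mpr h, rfl⟩
  have hpow1 : ∀ y : Multiplicative (ZMod p), y ^ p = 1 := by
    intro y
    have h3 : Multiplicative.toAdd (y ^ p) = Multiplicative.toAdd (1 : Multiplicative (ZMod p)) := by
      rw [toAdd_pow, toAdd_one, nsmul_eq_mul, ZMod.natCast_self, zero_mul]
    exact Multiplicative.toAdd.injective h3
  have hR1 : ⁅C, W⁆ ≤ Mful := by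
    rw [Subgroup.commutator_le]
    intro c hc u hu
    exact hMofval _ (hmemK c u hu) ((hCmem c).mp hc ⟨u, hu⟩)
  have hR2 : powSubgroup K p ≤ Mful := by
    apply powSubgroup_le
    intro x hx
    apply hMofval _ (pow_mem hx p)
    have h4 : (⟨x ^ p, pow_mem hx p⟩ : ↥K) = (⟨x, hx⟩ : ↥K) ^ p := by
      apply Subtype.ext
      push_cast
      rfl
    rw [h4, map_pow, hpow1]
  have hR3 : ⁅K, (⊤ : Subgroup G)⁆ ≤ Mful := by
    rw [Subgroup.commutator_le]
    intro k hk g _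
    have h5 : ⁅k, g⁆ ∈ L :=
      Subgroup.mem_sup_left (Subgroup.commutator_mem_commutator hk (Subgroup.mem_top g))
    exact hMofval _ (hLK h5) (hχL _ _ h5)
  have hintC := hint C hCn
  have hvC : ⁅verbal w C, (⊤ : Subgroup G)⁆ ≤ Mful :=
    le_trans hintC (sup_le (sup_le hR1 hR2) hR3)
  set D := ⨅ g : G, (ψ g).ker with hDdef
  have hsub : (verbal w C).subgroupOf W ≤ D := by
    intro u hu
    rw [Subgroup.mem_iInf]
    intro g
    rw [MonoidHom.mem_ker]
    show χ ⟨⁅g, (u : G)⁆, hmemK g u u.2⟩ = 1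
    have h4 : ⁅(u : G), g⁆ ∈ Mful :=
      hvC (Subgroup.commutator_mem_commutator (Subgroup.mem_subgroupOf.mp hu) (Subgroup.mem_top g))
    obtain ⟨hmem5, hval5⟩ := hMmem _ h4
    have hco : (⟨⁅g, (u : G)⁆, hmemK g u u.2⟩ : ↥K) = (⟨⁅(u : G), g⁆, hmem5⟩ : ↥K)⁻¹ := by
      apply Subtype.ext
      show ⁅g, (u : G)⁆ = ⁅(u : G), g⁆⁻¹
      rw [commutatorElement_inv]
    rw [hco, map_inv, hval5, inv_one]
  have hpair : C.index ≤ D.index := pairing_index_le hp φ ψ hcompat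
  have hDle : D.index ≤ (verbal w C).relIndex W := by
    have hdvd : D.index ∣ ((verbal w C).subgroupOf W).index := Subgroup.index_dvd_of_le hsub
    have hne : ((verbal w C).subgroupOf W).index ≠ 0 := Subgroup.index_ne_zero_of_finite
    exact Nat.le_of_dvd (Nat.pos_of_ne_zero hne) hdvd
  exact absurd (lt_of_le_of_lt (le_trans hpair hDle) h2) (lt_irrefl _)
end

section
/- Let p be an odd prime, i ≥ 2, and G a finite p-group satisfying [G,G]^{p^i} · γ_p(G)^{p^{i−1}} · γ_{p+1}(G) = 1. Then G is i-regular: for all x, y ∈ G, x^{p^i} y^{p^i} = (xy)^{p^i} z for some z ∈ ([⟨x,y⟩, ⟨x,y⟩])^{p^i}. -/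
namespace HallAux

open Subgroup
open scoped commutatorElement

variable {G : Type*} [Group G]

/-- `Lg G k` is `γ_k` with 1-based indexing (and `Lg G 0 = Lg G 1 = ⊤`). -/
def Lg (G : Type*) [Group G] (k : ℕ) : Subgroup G := (⊤ : Subgroup G).lowerCentralSeries (k - 1)

lemma Lg_antitone {a b : ℕ} (h : a ≤ b) : Lg G b ≤ Lg G a :=
  Subgroup.lowerCentralSeries_antitone _ (by omega)

/-- Three subgroups lemma, relative version. -/
lemma three_subgroups {H₁ H₂ H₃ N : Subgroup G} [hN : N.Normal]
    (h1 : ⁅⁅H₂, H₃⁆, H₁⁆ ≤ N) (h2 : ⁅⁅H₃, H₁⁆, H₂⁆ ≤ N) : ⁅⁅H₁, H₂⁆, H₃⁆ ≤ N := by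
  let π := QuotientGroup.mk' N
  have key : ∀ A B C : Subgroup G, ⁅⁅A, B⁆, C⁆ ≤ N ↔ ⁅⁅map π A, map π B⁆, map π C⁆ = ⊥ := by
    intro A B C
    rw [← Subgroup.map_commutator, ← Subgroup.map_commutator, Subgroup.map_eq_bot_iff,
      QuotientGroup.ker_mk']
  rw [key]
  exact Subgroup.commutator_commutator_eq_bot_of_rotate ((key _ _ _).mp h1) ((key _ _ _).mp h2)

lemma lcs_comm : ∀ (n m : ℕ), ⁅(⊤ : Subgroup G).lowerCentralSeries m, (⊤ : Subgroup G).lowerCentralSeries n⁆ ≤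
    (⊤ : Subgroup G).lowerCentralSeries (m + n + 1) := by
  intro n
  induction n with
  | zero => intro m; exact le_of_eq rfl
  | succ n ih =>
    intro m
    have h1 : (⊤ : Subgroup G).lowerCentralSeries (n+1) = ⁅(⊤ : Subgroup G).lowerCentralSeries n, (⊤ : Subgroup G)⁆ := rfl
    rw [Subgroup.commutator_comm, h1]
    apply three_subgroups
    · rw [Subgroup.commutator_comm (⊤ : Subgroup G)]
      calc ⁅⁅(⊤ : Subgroup G).lowerCentralSeries m, ⊤⁆, (⊤ : Subgroup G).lowerCentralSeries n⁆
          = ⁅(⊤ : Subgroup G).lowerCentralSeries (m+1), (⊤ : Subgroup G).lowerCentralSeries n⁆ := rfl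
        _ ≤ (⊤ : Subgroup G).lowerCentralSeries (m + 1 + n + 1) := ih (m+1)
        _ ≤ (⊤ : Subgroup G).lowerCentralSeries (m + (n+1) + 1) := le_of_eq (by ring_nf)
    · calc ⁅⁅(⊤ : Subgroup G).lowerCentralSeries m, (⊤ : Subgroup G).lowerCentralSeries n⁆, ⊤⁆
          ≤ ⁅(⊤ : Subgroup G).lowerCentralSeries (m+n+1), ⊤⁆ :=
            Subgroup.commutator_mono (ih m) le_rfl
        _ = (⊤ : Subgroup G).lowerCentralSeries (m+n+2) := rfl
        _ ≤ (⊤ : Subgroup G).lowerCentralSeries (m + (n+1) + 1) := le_of_eq (by ring_nf)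

lemma Lg_comm_mem {a b : ℕ} {x y : G} (hx : x ∈ Lg G a) (hy : y ∈ Lg G b) :
    ⁅x, y⁆ ∈ Lg G (max a 1 + max b 1) := by
  have hx' : x ∈ (⊤ : Subgroup G).lowerCentralSeries (max a 1 - 1) := Subgroup.lowerCentralSeries_antitone _ (by omega) hx
  have hy' : y ∈ (⊤ : Subgroup G).lowerCentralSeries (max b 1 - 1) := Subgroup.lowerCentralSeries_antitone _ (by omega) hy
  have := lcs_comm (G := G) (max b 1 - 1) (max a 1 - 1)
    (Subgroup.commutator_mem_commutator hx' hy')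
  exact Subgroup.lowerCentralSeries_antitone _ (by omega) this


/-- Forward difference operator on `G`-valued sequences. -/
def Dl (f : ℕ → G) : ℕ → G := fun n => f (n + 1) * (f n)⁻¹

lemma dl_mul_self (f : ℕ → G) (n : ℕ) : Dl f n * f n = f (n + 1) := by
  simp [Dl]

/-- Adapted sequences: `Mem s r f` morally says `f` has a binomial expansion
  `∏ e_j ^ C(n,j)` with `e_j ∈ γ_{max s (j+r)}`. -/
inductive Mem : ℕ → ℕ → (ℕ → G) → Prop
  | basic (s r : ℕ) (g : G) (k : ℕ) (hg : g ∈ Lg G (max s (k + r))) :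
      Mem s r (fun n => g ^ n.choose k)
  | one (s r : ℕ) : Mem s r 1
  | mul {s r : ℕ} {f g : ℕ → G} : Mem s r f → Mem s r g → Mem s r (f * g)
  | inv {s r : ℕ} {f : ℕ → G} : Mem s r f → Mem s r f⁻¹
  | comm {s₁ r₁ s₂ r₂ : ℕ} {f g : ℕ → G} : Mem s₁ r₁ f → Mem s₂ r₂ g →
      Mem (max s₁ 1 + max s₂ 1) (r₁ + r₂) ⁅f, g⁆
  | mono {s r s' r' : ℕ} {f : ℕ → G} : Mem s r f → s' ≤ s → r' ≤ r → Mem s' r' f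

lemma Mem.values {s r : ℕ} {f : ℕ → G} (h : Mem s r f) : ∀ n, f n ∈ Lg G (max s r) := by
  induction h with
  | basic s r g k hg =>
    intro n
    exact Lg_antitone (by omega) (pow_mem hg _)
  | one s r => intro n; exact one_mem _
  | mul hf hg ihf ihg => intro n; exact mul_mem (ihf n) (ihg n)
  | inv hf ihf => intro n; exact inv_mem (ihf n)
  | @comm s₁ r₁ s₂ r₂ f g hf hg ihf ihg =>
    intro n
    have := Lg_comm_mem (ihf n) (ihg n)
    exact Lg_antitone (by omega) this
  | mono hf hs hr ihf => intro n; exact Lg_antitone (by omega) (ihf n)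

lemma Mem.shift {s r : ℕ} {f : ℕ → G} (h : Mem s r f) : Mem s r (fun n => f (n + 1)) := by
  induction h with
  | basic s r g k hg =>
    match k with
    | 0 =>
      have e : (fun n : ℕ => (fun m : ℕ => g ^ m.choose 0) (n + 1)) = fun n : ℕ => g ^ n.choose 0 := by
        funext n; simp
      rw [e]
      exact Mem.basic s r g 0 hg
    | k + 1 =>
      have : (fun n => g ^ (n+1).choose (k+1)) =
          (fun n => g ^ n.choose k) * fun n => g ^ n.choose (k+1) := by
        funext n
        simp [Nat.choose_succ_succ, pow_add]
      rw [this]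
      exact Mem.mul (Mem.basic s r g k (Lg_antitone (by omega) hg)) (Mem.basic s r g (k+1) hg)
  | one s r => exact Mem.one s r
  | mul hf hg ihf ihg => exact Mem.mul ihf ihg
  | inv hf ihf => exact Mem.inv ihf
  | comm hf hg ihf ihg => exact Mem.comm ihf ihg
  | mono hf hs hr ihf => exact Mem.mono ihf hs hr

lemma Mem.conj {s r t q : ℕ} {x h : ℕ → G} (hx : Mem s r x) (hh : Mem t q h) :
    Mem s r (h * x * h⁻¹) := by
  have key : h * x * h⁻¹ = ⁅h, x⁆ * x := by
    funext n
    simp only [Pi.mul_apply, Pi.inv_apply, commutatorElement_def]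
    group
  rw [key]
  exact Mem.mul (Mem.mono (Mem.comm hh hx) (by omega) (by omega)) hx


lemma Mem.diff {s r : ℕ} {f : ℕ → G} (h : Mem s r f) : Mem s (r + 1) (Dl f) := by
  induction h with
  | basic s r g k hg =>
    match k with
    | 0 =>
      have e : Dl (fun n : ℕ => g ^ n.choose 0) = 1 := by
        funext n; simp [Dl]
      rw [e]; exact Mem.one s (r+1)
    | k + 1 =>
      have e : Dl (fun n : ℕ => g ^ n.choose (k+1)) = fun n : ℕ => g ^ n.choose k := by
        funext n
        show g ^ (n+1).choose (k+1) * (g ^ n.choose (k+1))⁻¹ = g ^ n.choose k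
        rw [Nat.choose_succ_succ, pow_add]
        exact mul_inv_cancel_right _ _
      rw [e]
      exact Mem.basic s (r+1) g k (by convert hg using 3; omega)
  | one s r =>
    have e : Dl (1 : ℕ → G) = 1 := by funext n; simp [Dl]
    rw [e]; exact Mem.one s (r+1)
  | @mul s r f g hf hg ihf ihg =>
    have e : Dl (f * g) = ⁅(fun n => f (n+1)), Dl g⁆ * (Dl g * Dl f) := by
      funext n
      simp only [Dl, commutatorElement_def, Pi.mul_apply, Pi.inv_apply]
      group
    rw [e]
    exact Mem.mul (Mem.mono (Mem.comm hf.shift ihg) (by omega) (by omega)) (Mem.mul ihg ihf)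
  | @inv s r f hf ihf =>
    have e : Dl f⁻¹ = ⁅(fun n => (f (n+1))⁻¹), (Dl f)⁻¹⁆ * (Dl f)⁻¹ := by
      funext n
      simp only [Dl, commutatorElement_def, Pi.mul_apply, Pi.inv_apply]
      group
    rw [e]
    exact Mem.mul (Mem.mono (Mem.comm (Mem.inv hf.shift) (Mem.inv ihf)) (by omega) (by omega))
      (Mem.inv ihf)
  | @comm s₁ r₁ s₂ r₂ f g hf hg ihf ihg =>
    have e : Dl ⁅f, g⁆ = (Dl f * ⁅f, Dl g⁆ * (Dl f)⁻¹) *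
        (⁅Dl f * Dl g, ⁅f, g⁆⁆ *
          (⁅f, g⁆ * (⁅Dl f, Dl g⁆ * (Dl g * ⁅Dl f, g⁆ * (Dl g)⁻¹)) * ⁅f, g⁆⁻¹)) := by
      funext n
      simp only [Dl, commutatorElement_def, Pi.mul_apply, Pi.inv_apply]
      group
    rw [e]
    refine Mem.mul ?_ (Mem.mul ?_ ?_)
    · -- conj by Dl f of ⁅f, Dl g⁆ ∈ Mem (s₁'+s₂') (r₁+r₂+1)
      have h1 : Mem (max s₁ 1 + max s₂ 1) (r₁ + r₂ + 1) ⁅f, Dl g⁆ := by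
        have := Mem.comm hf ihg
        exact Mem.mono this (by omega) (by omega)
      exact Mem.conj h1 ihf
    · -- ⁅Dl f * Dl g, ⁅f,g⁆⁆
      have hw : Mem 0 1 (Dl f * Dl g) :=
        Mem.mul (Mem.mono ihf (by omega) (by omega)) (Mem.mono ihg (by omega) (by omega))
      have hc : Mem (max s₁ 1 + max s₂ 1) (r₁ + r₂) ⁅f, g⁆ := Mem.comm hf hg
      have := Mem.comm hw hc
      exact Mem.mono this (by omega) (by omega)
    · -- conj by ⁅f,g⁆ of (⁅Dl f, Dl g⁆ * conj_{Dl g} ⁅Dl f, g⁆)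
      have hc : Mem (max s₁ 1 + max s₂ 1) (r₁ + r₂) ⁅f, g⁆ := Mem.comm hf hg
      have h1 : Mem (max s₁ 1 + max s₂ 1) (r₁ + r₂ + 1) ⁅Dl f, Dl g⁆ :=
        Mem.mono (Mem.comm ihf ihg) (by omega) (by omega)
      have h2 : Mem (max s₁ 1 + max s₂ 1) (r₁ + r₂ + 1) ⁅Dl f, g⁆ :=
        Mem.mono (Mem.comm ihf hg) (by omega) (by omega)
      exact Mem.conj (Mem.mul h1 (Mem.conj h2 ihg)) hc
  | mono hf hs hr ihf => exact Mem.mono ihf hs (by omega)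

lemma Mem.diff_iter {s r : ℕ} {f : ℕ → G} (h : Mem s r f) (t : ℕ) : Mem s (r + t) (Dl^[t] f) := by
  induction t with
  | zero => simpa using h
  | succ t ih =>
    rw [Function.iterate_succ_apply']
    exact Mem.mono ih.diff (le_refl _) (by omega)

section Maps
variable {H : Type*} [Group H]

lemma lcs_map_eq (φ : G →* H) (hφ : Function.Surjective φ) :
    ∀ n, Subgroup.map φ ((⊤ : Subgroup G).lowerCentralSeries n) = (⊤ : Subgroup H).lowerCentralSeries n := by
  intro n
  induction n with
  | zero =>
    simpa using Subgroup.map_top_of_surjective φ hφ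
  | succ n ih =>
    show Subgroup.map φ ⁅(⊤ : Subgroup G).lowerCentralSeries n, ⊤⁆ = ⁅(⊤ : Subgroup H).lowerCentralSeries n, ⊤⁆
    rw [Subgroup.map_commutator, ih, Subgroup.map_top_of_surjective φ hφ]

lemma Lg_map_eq (φ : G →* H) (hφ : Function.Surjective φ) (k : ℕ) :
    Subgroup.map φ (Lg G k) = Lg H k := lcs_map_eq φ hφ _

lemma Mem.map {s r : ℕ} {f : ℕ → G} (h : Mem s r f) (φ : G →* H)
    (hφ : Function.Surjective φ) : Mem s r (fun n => φ (f n)) := by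
  induction h with
  | basic s r g k hg =>
    have e : (fun n => φ (g ^ n.choose k)) = fun n : ℕ => (φ g) ^ n.choose k := by
      funext n; simp
    rw [e]
    refine Mem.basic s r (φ g) k ?_
    rw [← Lg_map_eq φ hφ]
    exact Subgroup.mem_map_of_mem φ hg
  | one s r =>
    have e : (fun n => φ ((1 : ℕ → G) n)) = (1 : ℕ → H) := by funext n; simp
    rw [e]; exact Mem.one s r
  | @mul s r f g hf hg ihf ihg =>
    have e : (fun n => φ ((f * g) n)) = (fun n => φ (f n)) * fun n => φ (g n) := by
      funext n; simp
    rw [e]; exact Mem.mul ihf ihg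
  | @inv s r f hf ihf =>
    have e : (fun n => φ (f⁻¹ n)) = (fun n => φ (f n))⁻¹ := by funext n; simp
    rw [e]; exact Mem.inv ihf
  | @comm s₁ r₁ s₂ r₂ f g hf hg ihf ihg =>
    have e : (fun n => φ (⁅f, g⁆ n)) = ⁅(fun n => φ (f n)), fun n => φ (g n)⁆ := by
      funext n
      simp only [commutatorElement_def, Pi.mul_apply, Pi.inv_apply, map_mul, map_inv]
    rw [e]; exact Mem.comm ihf ihg
  | mono hf hs hr ihf => exact Mem.mono ihf hs hr

lemma dl_map (φ : G →* H) (f : ℕ → G) : Dl (fun n => φ (f n)) = fun n => φ (Dl f n) := by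
  funext n; simp [Dl]

lemma dl_iter_map (φ : G →* H) (f : ℕ → G) (t : ℕ) :
    Dl^[t] (fun n => φ (f n)) = fun n => φ (Dl^[t] f n) := by
  induction t with
  | zero => rfl
  | succ t ih =>
    rw [Function.iterate_succ_apply', Function.iterate_succ_apply', ih, dl_map]

end Maps

/-- Newton's forward-difference formula in a commutative group. -/
lemma newton {A : Type*} [CommGroup A] :
    ∀ (n K : ℕ) (h : ℕ → A), (∀ m, Dl^[K] h m = 1) →
      h n = ((List.range K).map fun j => (Dl^[j] h 0) ^ n.choose j).prod := by
  intro n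
  induction n with
  | zero =>
    intro K h hK
    match K with
    | 0 => simpa using hK 0
    | K + 1 =>
      rw [List.prod_range_succ']
      have e1 : ∀ j : ℕ, (Dl^[j.succ] h 0) ^ (Nat.choose 0 j.succ) = 1 := by
        intro j; simp [Nat.choose_zero_succ]
      rw [List.prod_eq_one (by simpa using fun j _ => e1 j)]
      simp
  | succ n ih =>
    intro K h hK
    match K with
    | 0 =>
      have h1 : ∀ m, h m = 1 := by simpa using hK
      simp [h1]
    | K + 1 =>
      have hstep : h (n+1) = Dl h n * h n := (dl_mul_self h n).symm
      have hK' : ∀ m, Dl^[K] (Dl h) m = 1 := by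
        intro m
        have := hK m
        rwa [Function.iterate_succ_apply] at this
      rw [hstep, ih (K+1) h hK, ih K (Dl h) hK']
      rw [List.prod_range_succ', List.prod_range_succ']
      have e2 : ∀ j : ℕ, (Dl^[j.succ] h 0) ^ ((n+1).choose j.succ)
          = (Dl^[j] (Dl h) 0) ^ n.choose j * (Dl^[j.succ] h 0) ^ n.choose j.succ := by
        intro j
        rw [Nat.choose_succ_succ, pow_add, Function.iterate_succ_apply]
      have e3 : ((List.range K).map fun j => (Dl^[j.succ] h 0) ^ (n+1).choose j.succ).prod
          = ((List.range K).map fun j => (Dl^[j] (Dl h) 0) ^ n.choose j).prod *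
            ((List.range K).map fun j => (Dl^[j.succ] h 0) ^ n.choose j.succ).prod := by
        rw [← List.prod_map_mul]
        congr 1
        apply List.map_congr_left
        intro j _
        exact e2 j
      rw [e3]
      simp only [Nat.choose_zero_right, pow_one]
      exact mul_left_comm _ _ _

lemma mem_list_range_prod {s r : ℕ} (m : ℕ) (F : ℕ → ℕ → G) (hF : ∀ j, Mem s r (F j)) :
    Mem s r (fun n => ((List.range m).map fun j => F j n).prod) := by
  induction m with
  | zero =>
    have e : (fun n => ((List.range 0).map fun j => F j n).prod) = (1 : ℕ → G) := by
      funext n; simp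
    rw [e]; exact Mem.one s r
  | succ m ih =>
    have e : (fun n => ((List.range (m+1)).map fun j => F j n).prod)
        = (fun n => ((List.range m).map fun j => F j n).prod) * F m := by
      funext n; simp [List.prod_range_succ]
    rw [e]; exact Mem.mul ih (hF m)

lemma central_merge (m : ℕ) (a b : ℕ → G) (hb : ∀ j, b j ∈ Subgroup.center G) (w : ℕ → ℕ) :
    ((List.range m).map fun j => (a j * b j) ^ w j).prod
      = ((List.range m).map fun j => a j ^ w j).prod *
        ((List.range m).map fun j => b j ^ w j).prod := by
  induction m with
  | zero => simp
  | succ m ih =>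
    rw [List.prod_range_succ, List.prod_range_succ, List.prod_range_succ, ih]
    have hcom : Commute (a m) (b m) := Subgroup.mem_center_iff.mp (hb m) (a m)
    rw [hcom.mul_pow]
    have hPb : ((List.range m).map fun j => b j ^ w j).prod ∈ Subgroup.center G := by
      apply Subgroup.list_prod_mem
      intro x hx
      simp only [List.mem_map, List.mem_range] at hx
      obtain ⟨j, _, rfl⟩ := hx
      exact Subgroup.pow_mem _ (hb j) _
    have hswap : ((List.range m).map fun j => b j ^ w j).prod * a m ^ w m
        = a m ^ w m * ((List.range m).map fun j => b j ^ w j).prod :=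
      (Subgroup.mem_center_iff.mp hPb _).symm
    calc ((List.range m).map fun j => a j ^ w j).prod *
          ((List.range m).map fun j => b j ^ w j).prod * (a m ^ w m * b m ^ w m)
        = ((List.range m).map fun j => a j ^ w j).prod *
          (((List.range m).map fun j => b j ^ w j).prod * a m ^ w m) * b m ^ w m := by
          group
      _ = ((List.range m).map fun j => a j ^ w j).prod *
          (a m ^ w m * ((List.range m).map fun j => b j ^ w j).prod) * b m ^ w m := by
          rw [hswap]
      _ = ((List.range m).map fun j => a j ^ w j).prod * a m ^ w m *
          (((List.range m).map fun j => b j ^ w j).prod * b m ^ w m) := by group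

lemma prod_choose_zero (e : ℕ → G) (m : ℕ) :
    ((List.range (m+1)).map fun j => e j ^ (0:ℕ).choose j).prod = e 0 := by
  rw [List.prod_range_succ']
  have h1 : ∀ xx ∈ (List.range m).map
      (fun i => e (i.succ) ^ (0:ℕ).choose (i.succ)), xx = 1 := by
    intro xx hxx
    simp only [List.mem_map] at hxx
    obtain ⟨i, _, rfl⟩ := hxx
    simp [Nat.choose_zero_succ]
  rw [List.prod_eq_one h1]
  simp

lemma prod_choose_one (e : ℕ → G) (m : ℕ) :
    ((List.range (m+2)).map fun j => e j ^ (1:ℕ).choose j).prod = e 0 * e 1 := by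
  rw [List.prod_range_succ', List.prod_range_succ']
  have h1 : ∀ xx ∈ (List.range m).map
      (fun i => e (i.succ.succ) ^ (1:ℕ).choose (i.succ.succ)), xx = 1 := by
    intro xx hxx
    simp only [List.mem_map] at hxx
    obtain ⟨i, _, rfl⟩ := hxx
    have : (1:ℕ).choose (i.succ.succ) = 0 := Nat.choose_eq_zero_of_lt (by omega)
    rw [this, pow_zero]
  rw [List.prod_eq_one h1]
  simp

universe u

open scoped IsMulCommutative in
theorem binom_repr (c : ℕ) : ∀ {G : Type u} [Group G],
    (⊤ : Subgroup G).lowerCentralSeries c = ⊥ → ∀ f : ℕ → G, Mem 0 0 f →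
    ∃ e : ℕ → G, (∀ j, e j ∈ Lg G j) ∧
      ∀ n, f n = ((List.range (c+1)).map fun j => e j ^ n.choose j).prod := by
  induction c with
  | zero =>
    intro G _ hc f hf
    refine ⟨fun _ => 1, fun j => one_mem _, fun n => ?_⟩
    have h1 : ∀ g : G, g = 1 := fun g => Subgroup.mem_bot.mp (hc ▸ Subgroup.mem_top g)
    rw [h1 (f n)]
    simp
  | succ c ih =>
    intro G _ hc f hf
    set Z := (⊤ : Subgroup G).lowerCentralSeries c with hZdef
    have hcent : ∀ z ∈ Z, z ∈ Subgroup.center G := by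
      intro z hz
      rw [Subgroup.mem_center_iff]
      intro g
      have h1 : ⁅z, g⁆ ∈ (⊤ : Subgroup G).lowerCentralSeries (c+1) :=
        Subgroup.commutator_mem_commutator hz (Subgroup.mem_top g)
      rw [hc] at h1
      exact ((commutatorElement_eq_one_iff_commute.mp (Subgroup.mem_bot.mp h1)).symm).eq
    set π := QuotientGroup.mk' Z with hπdef
    have hπ : Function.Surjective π := QuotientGroup.mk'_surjective Z
    have hQ : (⊤ : Subgroup (G ⧸ Z)).lowerCentralSeries c = ⊥ := by
      rw [← lcs_map_eq π hπ c, Subgroup.map_eq_bot_iff, hπdef, QuotientGroup.ker_mk']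
    obtain ⟨eb, heb, hfb⟩ := ih hQ (fun n => π (f n)) (hf.map π hπ)
    have hlift : ∀ j, ∃ g : G, g ∈ Lg G j ∧ π g = eb j := by
      intro j
      have h3 : eb j ∈ Subgroup.map π (Lg G j) := by rw [Lg_map_eq π hπ]; exact heb j
      exact Subgroup.mem_map.mp h3
    choose e0 he0 hpe0 using hlift
    set E : ℕ → G := fun j => if j ≤ c then e0 j else 1 with hEdef
    have hE : ∀ j, E j ∈ Lg G j := by
      intro j
      show (if j ≤ c then e0 j else 1) ∈ Lg G j
      by_cases hj : j ≤ c
      · rw [if_pos hj]; exact he0 j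
      · rw [if_neg hj]; exact one_mem _
    set F : ℕ → G := fun n => ((List.range (c+2)).map fun j => E j ^ n.choose j).prod with hFdef
    have hπF : ∀ n, π (F n) = π (f n) := by
      intro n
      have h4 : π (F n) = ((List.range (c+2)).map fun j => π (E j) ^ n.choose j).prod := by
        show π (((List.range (c+2)).map fun j => E j ^ n.choose j).prod) = _
        rw [map_list_prod, List.map_map]
        refine congrArg List.prod ?_
        apply List.map_congr_left
        intro j _
        simp
      rw [h4, List.prod_range_succ]
      have h5 : π (E (c+1)) ^ n.choose (c+1) = 1 := by
        have : E (c+1) = 1 := by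
          show (if c+1 ≤ c then e0 (c+1) else 1) = 1
          rw [if_neg (by omega)]
        rw [this]
        simp
      have h6 : ∀ j, j ≤ c → π (E j) = eb j := by
        intro j hj
        show π (if j ≤ c then e0 j else 1) = eb j
        rw [if_pos hj]
        exact hpe0 j
      have h7 : ((List.range (c+1)).map fun j => π (E j) ^ n.choose j).prod
          = ((List.range (c+1)).map fun j => eb j ^ n.choose j).prod := by
        congr 1
        apply List.map_congr_left
        intro j hj
        rw [h6 j (by simp only [List.mem_range] at hj; omega)]
      rw [h7, h5, mul_one]
      exact (hfb n).symm
    set h0 : ℕ → G := fun n => (F n)⁻¹ * f n with h0def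
    have hmemZ : ∀ n, h0 n ∈ Z := by
      intro n
      have h8 : π (h0 n) = 1 := by
        show π ((F n)⁻¹ * f n) = 1
        rw [map_mul, map_inv, hπF n]
        group
      have h9 : h0 n ∈ π.ker := MonoidHom.mem_ker.mpr h8
      rwa [hπdef, QuotientGroup.ker_mk'] at h9
    have MemF : Mem 0 0 F := by
      rw [hFdef]
      apply mem_list_range_prod
      intro j
      refine Mem.basic 0 0 (E j) j ?_
      have hmx : max 0 (j + 0) = j := by omega
      rw [hmx]
      exact hE j
    have Memh : Mem 0 0 h0 := Mem.mul (Mem.inv MemF) hf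
    have hvanish : ∀ m, Dl^[c+2] h0 m = 1 := by
      intro m
      have h10 := (Memh.diff_iter (c+2)).values m
      have h11 : Lg G (max 0 (0 + (c+2))) = (⊤ : Subgroup G).lowerCentralSeries (c+1) := by
        show (⊤ : Subgroup G).lowerCentralSeries (max 0 (0 + (c+2)) - 1) = _
        congr 1
        omega
      rw [h11, hc] at h10
      exact Subgroup.mem_bot.mp h10
    have hZvals : ∀ t n, Dl^[t] h0 n ∈ Z := by
      intro t
      induction t with
      | zero => exact hmemZ
      | succ t iht =>
        intro n
        rw [Function.iterate_succ_apply']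
        exact mul_mem (iht (n+1)) (inv_mem (iht n))
    set h' : ℕ → Subgroup.center G := fun n => ⟨h0 n, hcent _ (hmemZ n)⟩ with h'def
    set ι : Subgroup.center G →* G := (Subgroup.center G).subtype with hιdef
    have hiter : ∀ t, (fun n => ι (Dl^[t] h' n)) = Dl^[t] h0 := by
      intro t
      rw [← dl_iter_map ι h']
      rfl
    have hprem : ∀ m, Dl^[c+2] h' m = 1 := by
      intro m
      have hh := congrFun (hiter (c+2)) m
      apply Subtype.ext
      show ι (Dl^[c+2] h' m) = ((1 : Subgroup.center G) : G)
      rw [hh, hvanish m]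
      rfl
    have hnewtonG : ∀ n, h0 n
        = ((List.range (c+2)).map fun j => (Dl^[j] h0 0) ^ n.choose j).prod := by
      intro n
      have h12 := congrArg ι (newton n (c+2) h' hprem)
      rw [map_list_prod, List.map_map] at h12
      have hP12 : ((List.range (c+2)).map (ι ∘ fun j => (Dl^[j] h' 0) ^ n.choose j)).prod
          = ((List.range (c+2)).map fun j => (Dl^[j] h0 0) ^ n.choose j).prod := by
        congr 1
        apply List.map_congr_left
        intro j _
        simp only [Function.comp_apply, map_pow]
        congr 1
        exact congrFun (hiter j) 0
      exact h12.trans hP12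
    have hzZ : ∀ j, Dl^[j] h0 0 ∈ Z := fun j => hZvals j 0
    set zz : ℕ → G := fun j => if j ≤ c+1 then Dl^[j] h0 0 else 1 with hzzdef
    have hzzc : ∀ j, zz j ∈ Subgroup.center G := by
      intro j
      show (if j ≤ c+1 then Dl^[j] h0 0 else 1) ∈ Subgroup.center G
      by_cases hj : j ≤ c+1
      · rw [if_pos hj]; exact hcent _ (hzZ j)
      · rw [if_neg hj]; exact one_mem _
    refine ⟨fun j => E j * zz j, ?_, ?_⟩
    · intro j
      apply mul_mem (hE j)
      show (if j ≤ c+1 then Dl^[j] h0 0 else 1) ∈ Lg G j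
      by_cases hj : j ≤ c+1
      · rw [if_pos hj]
        have hzlg : Dl^[j] h0 0 ∈ Lg G (c+1) := by
          show Dl^[j] h0 0 ∈ (⊤ : Subgroup G).lowerCentralSeries (c+1-1)
          have hci : (c+1-1) = c := by omega
          rw [hci]
          exact hzZ j
        exact Lg_antitone (show j ≤ c + 1 from hj) hzlg
      · rw [if_neg hj]; exact one_mem _
    · intro n
      have h14 : f n = F n * h0 n := by
        rw [h0def]
        show f n = F n * ((F n)⁻¹ * f n)
        group
      show f n = ((List.range (c+2)).map fun j => (E j * zz j) ^ n.choose j).prod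
      rw [h14, hnewtonG n, central_merge (c+2) E zz hzzc (fun j => n.choose j)]
      have h15 : ((List.range (c+2)).map fun j => zz j ^ n.choose j).prod
          = ((List.range (c+2)).map fun j => (Dl^[j] h0 0) ^ n.choose j).prod := by
        refine congrArg List.prod ?_
        apply List.map_congr_left
        intro j hj
        simp only [List.mem_range] at hj
        show (if j ≤ c+1 then Dl^[j] h0 0 else 1) ^ n.choose j = (Dl^[j] h0 0) ^ n.choose j
        rw [if_pos (by omega)]
      rw [h15]


theorem main_step {G : Type*} [Group G] {p i : ℕ}
    (hp : p.Prime) (hi : 1 ≤ i)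
    (h1 : powSubgroup (commutator G) (p ^ i) = ⊥)
    (h2 : powSubgroup ((⊤ : Subgroup G).lowerCentralSeries (p - 1)) (p ^ (i - 1)) = ⊥)
    (h3 : (⊤ : Subgroup G).lowerCentralSeries p = ⊥) (x y : G) :
    x ^ p ^ i * y ^ p ^ i = (x * y) ^ p ^ i := by
  classical
  -- the discrepancy sequence
  set f : ℕ → G := fun n => (x ^ n * y ^ n)⁻¹ * (x * y) ^ n with hfdef
  have hmemf : Mem 0 0 f := by
    have e : f = (fun n => (y⁻¹) ^ n.choose 1) *
        ((fun n => (x⁻¹) ^ n.choose 1) * fun n => (x * y) ^ n.choose 1) := by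
      funext n
      simp [hfdef, Nat.choose_one_right, mul_inv_rev, mul_assoc]
    rw [e]
    have htop : ∀ g : G, g ∈ Lg G (max 0 (1 + 0)) := by
      intro g
      show g ∈ (⊤ : Subgroup G).lowerCentralSeries (max 0 (1+0) - 1)
      have : max 0 (1+0) - 1 = 0 := by omega
      rw [this, Subgroup.lowerCentralSeries_zero]
      exact Subgroup.mem_top g
    exact Mem.mul (Mem.basic 0 0 y⁻¹ 1 (htop _))
      (Mem.mul (Mem.basic 0 0 x⁻¹ 1 (htop _)) (Mem.basic 0 0 (x*y) 1 (htop _)))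
  obtain ⟨e, he, heq⟩ := binom_repr p h3 f hmemf
  -- e 0 = 1
  have hf0 : f 0 = 1 := by simp [hfdef]
  have he0 : e 0 = 1 := by
    have := heq 0
    rw [hf0] at this
    obtain ⟨m, hm⟩ : ∃ m, p = m + 1 := ⟨p - 1, by have := hp.pos; omega⟩
    rw [hm] at this
    rw [prod_choose_zero e (m+1)] at this
    exact this.symm
  -- e 1 = 1
  have hf1 : f 1 = 1 := by
    show (x ^ 1 * y ^ 1)⁻¹ * (x * y) ^ 1 = 1
    group
  have he1 : e 1 = 1 := by
    have := heq 1
    rw [hf1] at this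
    obtain ⟨m, hm⟩ : ∃ m, p = m + 1 := ⟨p - 1, by have := hp.pos; omega⟩
    rw [hm] at this
    rw [prod_choose_one e m] at this
    rw [he0, one_mul] at this
    exact this.symm
  -- kill each factor at n = p ^ i
  have hkill1 : ∀ g ∈ commutator G, g ^ p ^ i = 1 := by
    intro g hg
    have : g ^ p ^ i ∈ powSubgroup (commutator G) (p ^ i) :=
      Subgroup.subset_closure ⟨g, hg, rfl⟩
    rw [h1] at this
    exact Subgroup.mem_bot.mp this
  have hkill2 : ∀ g ∈ (⊤ : Subgroup G).lowerCentralSeries (p - 1), g ^ p ^ (i-1) = 1 := by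
    intro g hg
    have : g ^ p ^ (i-1) ∈ powSubgroup ((⊤ : Subgroup G).lowerCentralSeries (p-1)) (p ^ (i-1)) :=
      Subgroup.subset_closure ⟨g, hg, rfl⟩
    rw [h2] at this
    exact Subgroup.mem_bot.mp this
  -- binomial identity
  have hbinom : ∀ j, 1 ≤ j → p ^ i * ((p ^ i - 1).choose (j - 1)) = (p ^ i).choose j * j := by
    intro j hj
    have hkey := Nat.add_one_mul_choose_eq (p ^ i - 1) (j - 1)
    have hp1 : (p ^ i - 1).succ = p ^ i := Nat.succ_pred_eq_of_pos (pow_pos hp.pos i)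
    have hj1 : (j - 1).succ = j := Nat.succ_pred_eq_of_pos (n := j) (by omega)
    rwa [show p ^ i - 1 + 1 = p ^ i from hp1, show j - 1 + 1 = j from hj1] at hkey
  have hdvd1 : ∀ j, 1 ≤ j → j < p → p ^ i ∣ (p ^ i).choose j := by
    intro j hj hjp
    have hco : Nat.Coprime (p ^ i) j := by
      apply Nat.Coprime.pow_left
      rw [Nat.Prime.coprime_iff_not_dvd hp]
      intro hdvd
      have := Nat.le_of_dvd (by omega) hdvd
      omega
    exact hco.dvd_of_dvd_mul_right ⟨_, (hbinom j hj).symm⟩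
  have hdvd2 : p ^ (i-1) ∣ (p ^ i).choose p := by
    have hb := hbinom p hp.pos
    have hpi : p ^ i = p ^ (i - 1) * p := by
      rw [← pow_succ]
      congr 1
      omega
    have hb2 : p ^ (i-1) * ((p ^ i - 1).choose (p - 1)) * p = (p ^ i).choose p * p := by
      calc p ^ (i-1) * ((p ^ i - 1).choose (p - 1)) * p
          = p ^ (i-1) * p * ((p ^ i - 1).choose (p - 1)) := by ring
        _ = p ^ i * ((p ^ i - 1).choose (p - 1)) := by rw [← hpi]
        _ = (p ^ i).choose p * p := hb
    have := Nat.eq_of_mul_eq_mul_right hp.pos hb2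
    exact ⟨_, this.symm⟩
  -- evaluate
  have hfpi : f (p ^ i) = 1 := by
    rw [heq (p ^ i)]
    apply List.prod_eq_one
    intro xx hxx
    simp only [List.mem_map, List.mem_range] at hxx
    obtain ⟨j, hjr, rfl⟩ := hxx
    rcases Nat.lt_or_ge j 2 with hj2 | hj2
    · interval_cases j
      · rw [he0, one_pow]
      · rw [he1, one_pow]
    · rcases Nat.lt_or_ge j p with hjp | hjp
      · -- 2 ≤ j < p : e j ∈ commutator G, exponent divisible by p^i
        have hej : e j ∈ commutator G := by
          have h5 : Lg G j ≤ (⊤ : Subgroup G).lowerCentralSeries 1 :=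
            Subgroup.lowerCentralSeries_antitone _ (by omega)
          rw [Subgroup.top_lowerCentralSeries_one] at h5
          exact h5 (he j)
        obtain ⟨t, ht⟩ := hdvd1 j (by omega) hjp
        rw [ht, pow_mul, hkill1 _ hej, one_pow]
      · -- j = p
        have hjp' : j = p := by omega
        subst hjp'
        have hej : e j ∈ (⊤ : Subgroup G).lowerCentralSeries (j - 1) := he j
        obtain ⟨t, ht⟩ := hdvd2
        rw [ht, pow_mul, hkill2 _ hej, one_pow]
  -- conclude
  have : (x ^ p ^ i * y ^ p ^ i)⁻¹ * (x * y) ^ p ^ i = 1 := hfpi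
  calc x ^ p ^ i * y ^ p ^ i
      = x ^ p ^ i * y ^ p ^ i * ((x ^ p ^ i * y ^ p ^ i)⁻¹ * (x * y) ^ p ^ i) := by
        rw [this, mul_one]
    _ = (x * y) ^ p ^ i := by group

end HallAux

/-- Let `p` be odd, `i ≥ 2`, and `G` a finite `p`-group with
`[G,G]^{p^i} γ_p(G)^{p^{i-1}} γ_{p+1}(G) = 1`. Then `G` is `i`-regular: for all `x, y`,
`x^{p^i} y^{p^i} = (xy)^{p^i} z` with `z ∈ ([⟨x,y⟩,⟨x,y⟩])^{p^i}`. -/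
theorem iRegular_of_relations {G : Type*} [Group G] [Finite G] {p i : ℕ}
    (hp : p.Prime) (hodd : Odd p) (hi : 2 ≤ i) (hG : IsPGroup p G)
    (h : powSubgroup (commutator G) (p ^ i) ⊔
          powSubgroup ((⊤ : Subgroup G).lowerCentralSeries (p - 1)) (p ^ (i - 1)) ⊔
          (⊤ : Subgroup G).lowerCentralSeries p = ⊥) :
    ∀ x y : G,
      ∃ z ∈ powSubgroup ⁅Subgroup.closure {x, y}, Subgroup.closure {x, y}⁆ (p ^ i),
        x ^ p ^ i * y ^ p ^ i = (x * y) ^ p ^ i * z := by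
  intro x y
  have hA : powSubgroup (commutator G) (p ^ i) ≤ ⊥ := by
    rw [← h]; exact le_sup_of_le_left le_sup_left
  have hB : powSubgroup ((⊤ : Subgroup G).lowerCentralSeries (p - 1)) (p ^ (i - 1)) ≤ ⊥ := by
    rw [← h]; exact le_sup_of_le_left le_sup_right
  have hC : (⊤ : Subgroup G).lowerCentralSeries p ≤ ⊥ := by
    rw [← h]; exact le_sup_right
  have hmain := HallAux.main_step hp (by omega) (le_bot_iff.mp hA) (le_bot_iff.mp hB)
    (le_bot_iff.mp hC) x y
  exact ⟨1, Subgroup.one_mem _, by rw [mul_one]; exact hmain⟩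
end

section
/- Let G be a finite p-group, N ⊴ G a normal subgroup, and p an odd prime. Then [γ_p(N), G] ≤ [γ_p(G), N]. -/
/-- The lower central series of a subgroup `H ≤ G`, as subgroups of `G`:
`gammaSub H m = γ_{m+1}(H)`. -/
def gammaSub {G : Type*} [Group G] (H : Subgroup G) : ℕ → Subgroup G
  | 0 => H
  | m + 1 => ⁅gammaSub H m, H⁆

section Aux

variable {G : Type*} [Group G]

open Subgroup

/-- Three subgroups lemma, relative form. -/
lemma three_subgroups_le {A B C K : Subgroup G} [hK : K.Normal]
    (h1 : ⁅⁅B, C⁆, A⁆ ≤ K) (h2 : ⁅⁅C, A⁆, B⁆ ≤ K) : ⁅⁅A, B⁆, C⁆ ≤ K := by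
  let f := QuotientGroup.mk' K
  have key : ∀ X Y Z : Subgroup G,
      ⁅⁅X, Y⁆, Z⁆ ≤ K ↔ ⁅⁅X.map f, Y.map f⁆, Z.map f⁆ = ⊥ := by
    intro X Y Z
    rw [← Subgroup.map_commutator, ← Subgroup.map_commutator,
      Subgroup.map_eq_bot_iff, QuotientGroup.ker_mk']
  rw [key]
  exact Subgroup.commutator_commutator_eq_bot_of_rotate
    ((key B C A).mp h1) ((key C A B).mp h2)

lemma gammaSub_normal {H : Subgroup G} (hH : H.Normal) (m : ℕ) :
    (gammaSub H m).Normal := by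
  induction m with
  | zero => exact hH
  | succ m ih => exact Subgroup.commutator_normal _ _

lemma gammaSub_mono {H K : Subgroup G} (h : H ≤ K) (m : ℕ) :
    gammaSub H m ≤ gammaSub K m := by
  induction m with
  | zero => exact h
  | succ m ih => exact Subgroup.commutator_mono ih h

lemma gammaSub_top_succ_normal (m : ℕ) : (gammaSub (⊤ : Subgroup G) m).Normal :=
  gammaSub_normal inferInstance m

lemma gammaSub_le_self {N : Subgroup G} (hN : N.Normal) (m : ℕ) :
    gammaSub N m ≤ N := by
  cases m with
  | zero => exact le_rfl
  | succ m => exact Subgroup.commutator_le_right _ _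

/-- `[γ_{k+1}(N), γ_{i+1}(G) ⊓ N] ≤ [γ_{k+i+1}(G), N]` for normal `N`. -/
lemma gammaSub_inf_le {N : Subgroup G} (hN : N.Normal) :
    ∀ k i : ℕ, ⁅gammaSub N k, gammaSub (⊤ : Subgroup G) i ⊓ N⁆ ≤
      ⁅gammaSub (⊤ : Subgroup G) (k + i), N⁆ := by
  intro k
  induction k with
  | zero =>
    intro i
    rw [Nat.zero_add]
    calc ⁅gammaSub N 0, gammaSub (⊤ : Subgroup G) i ⊓ N⁆
        ≤ ⁅gammaSub (⊤ : Subgroup G) i ⊓ N, N⁆ := by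
          rw [Subgroup.commutator_comm]
          exact Subgroup.commutator_mono le_rfl le_rfl
      _ ≤ ⁅gammaSub (⊤ : Subgroup G) i, N⁆ :=
          Subgroup.commutator_mono inf_le_left le_rfl
  | succ k ih =>
    intro i
    haveI : N.Normal := hN
    haveI : (gammaSub N k).Normal := gammaSub_normal hN k
    haveI : (gammaSub (⊤ : Subgroup G) i).Normal := gammaSub_top_succ_normal i
    haveI : (gammaSub (⊤ : Subgroup G) i ⊓ N).Normal := Subgroup.normal_inf_normal _ _
    haveI : (gammaSub (⊤ : Subgroup G) (k + 1 + i)).Normal := gammaSub_top_succ_normal _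
    haveI : (⁅gammaSub (⊤ : Subgroup G) (k + 1 + i), N⁆).Normal :=
      Subgroup.commutator_normal _ _
    show ⁅⁅gammaSub N k, N⁆, gammaSub (⊤ : Subgroup G) i ⊓ N⁆ ≤ _
    apply three_subgroups_le
    · -- ⁅⁅N, γ_{i+1} ⊓ N⁆, γ_{k+1}(N)⁆
      have h1 : ⁅N, gammaSub (⊤ : Subgroup G) i ⊓ N⁆ ≤
          gammaSub (⊤ : Subgroup G) (i + 1) ⊓ N := by
        refine le_inf ?_ ((Subgroup.commutator_le_right _ _).trans inf_le_right)
        calc ⁅N, gammaSub (⊤ : Subgroup G) i ⊓ N⁆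
            ≤ ⁅gammaSub (⊤ : Subgroup G) i ⊓ N, N⁆ := by
              rw [Subgroup.commutator_comm]
          _ ≤ ⁅gammaSub (⊤ : Subgroup G) i, ⊤⁆ :=
              Subgroup.commutator_mono inf_le_left le_top
          _ = gammaSub (⊤ : Subgroup G) (i + 1) := rfl
      calc ⁅⁅N, gammaSub (⊤ : Subgroup G) i ⊓ N⁆, gammaSub N k⁆
          = ⁅gammaSub N k, ⁅N, gammaSub (⊤ : Subgroup G) i ⊓ N⁆⁆ :=
            Subgroup.commutator_comm _ _
        _ ≤ ⁅gammaSub N k, gammaSub (⊤ : Subgroup G) (i + 1) ⊓ N⁆ :=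
            Subgroup.commutator_mono le_rfl h1
        _ ≤ ⁅gammaSub (⊤ : Subgroup G) (k + (i + 1)), N⁆ := ih (i + 1)
        _ = ⁅gammaSub (⊤ : Subgroup G) (k + 1 + i), N⁆ := by
            rw [show k + (i + 1) = k + 1 + i by omega]
    · -- ⁅⁅γ_{i+1} ⊓ N, γ_{k+1}(N)⁆, N⁆
      have h2 : ⁅gammaSub (⊤ : Subgroup G) i ⊓ N, gammaSub N k⁆ ≤
          gammaSub (⊤ : Subgroup G) (k + i + 1) ⊓ N := by
        refine le_inf ?_ ?_
        · calc ⁅gammaSub (⊤ : Subgroup G) i ⊓ N, gammaSub N k⁆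
              = ⁅gammaSub N k, gammaSub (⊤ : Subgroup G) i ⊓ N⁆ :=
                Subgroup.commutator_comm _ _
            _ ≤ ⁅gammaSub (⊤ : Subgroup G) (k + i), N⁆ := ih i
            _ ≤ ⁅gammaSub (⊤ : Subgroup G) (k + i), ⊤⁆ :=
                Subgroup.commutator_mono le_rfl le_top
            _ = gammaSub (⊤ : Subgroup G) (k + i + 1) := rfl
        · calc ⁅gammaSub (⊤ : Subgroup G) i ⊓ N, gammaSub N k⁆
              ≤ ⁅N, gammaSub N k⁆ := Subgroup.commutator_mono inf_le_right le_rfl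
            _ ≤ N := Subgroup.commutator_le_left _ _
      calc ⁅⁅gammaSub (⊤ : Subgroup G) i ⊓ N, gammaSub N k⁆, N⁆
          ≤ ⁅gammaSub (⊤ : Subgroup G) (k + i + 1) ⊓ N, N⁆ :=
            Subgroup.commutator_mono h2 le_rfl
        _ ≤ ⁅gammaSub (⊤ : Subgroup G) (k + i + 1), N⁆ :=
            Subgroup.commutator_mono inf_le_left le_rfl
        _ = ⁅gammaSub (⊤ : Subgroup G) (k + 1 + i), N⁆ := by
            rw [show k + i + 1 = k + 1 + i by omega]

/-- Main general lemma: `[γ_{m+1}(N), G] ≤ [γ_{m+1}(G), N]` for normal `N`. -/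
lemma commutator_gammaSub_top_le {N : Subgroup G} (hN : N.Normal) (m : ℕ) :
    ⁅gammaSub N m, (⊤ : Subgroup G)⁆ ≤ ⁅gammaSub (⊤ : Subgroup G) m, N⁆ := by
  induction m with
  | zero => exact (Subgroup.commutator_comm _ _).le
  | succ m ih =>
    haveI : N.Normal := hN
    haveI : (gammaSub N m).Normal := gammaSub_normal hN m
    haveI : (gammaSub (⊤ : Subgroup G) (m + 1)).Normal := gammaSub_top_succ_normal _
    haveI : (gammaSub (⊤ : Subgroup G) 1).Normal := gammaSub_top_succ_normal _
    haveI : (⁅gammaSub (⊤ : Subgroup G) (m + 1), N⁆).Normal :=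
      Subgroup.commutator_normal _ _
    show ⁅⁅gammaSub N m, N⁆, ⊤⁆ ≤ _
    apply three_subgroups_le
    · -- ⁅⁅N, ⊤⁆, γ_{m+1}(N)⁆
      have h1 : ⁅N, (⊤ : Subgroup G)⁆ ≤ gammaSub (⊤ : Subgroup G) 1 ⊓ N := by
        refine le_inf (Subgroup.commutator_mono le_top le_rfl) ?_
        rw [Subgroup.commutator_comm]
        exact Subgroup.commutator_le_right _ _
      calc ⁅⁅N, (⊤ : Subgroup G)⁆, gammaSub N m⁆
          = ⁅gammaSub N m, ⁅N, (⊤ : Subgroup G)⁆⁆ := Subgroup.commutator_comm _ _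
        _ ≤ ⁅gammaSub N m, gammaSub (⊤ : Subgroup G) 1 ⊓ N⁆ :=
            Subgroup.commutator_mono le_rfl h1
        _ ≤ ⁅gammaSub (⊤ : Subgroup G) (m + 1), N⁆ := gammaSub_inf_le hN m 1
    · -- ⁅⁅⊤, γ_{m+1}(N)⁆, N⁆
      have h2 : ⁅(⊤ : Subgroup G), gammaSub N m⁆ ≤
          gammaSub (⊤ : Subgroup G) (m + 1) ⊓ N := by
        refine le_inf ?_ ?_
        · calc ⁅(⊤ : Subgroup G), gammaSub N m⁆
              = ⁅gammaSub N m, (⊤ : Subgroup G)⁆ := Subgroup.commutator_comm _ _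
            _ ≤ ⁅gammaSub (⊤ : Subgroup G) m, N⁆ := ih
            _ ≤ ⁅gammaSub (⊤ : Subgroup G) m, ⊤⁆ :=
                Subgroup.commutator_mono le_rfl le_top
        · exact (Subgroup.commutator_mono le_rfl (gammaSub_le_self hN m)).trans
            (Subgroup.commutator_le_right _ _)
      calc ⁅⁅(⊤ : Subgroup G), gammaSub N m⁆, N⁆
          ≤ ⁅gammaSub (⊤ : Subgroup G) (m + 1) ⊓ N, N⁆ :=
            Subgroup.commutator_mono h2 le_rfl
        _ ≤ ⁅gammaSub (⊤ : Subgroup G) (m + 1), N⁆ :=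
            Subgroup.commutator_mono inf_le_left le_rfl

end Aux

/-- For an odd prime `p`, a finite `p`-group `G` and a normal subgroup `N ⊴ G`,
`[γ_p(N), G] ≤ [γ_p(G), N]`. -/
theorem commutator_gammaP_le {G : Type*} [Group G] [Finite G] {p : ℕ}
    (hp : p.Prime) (hodd : Odd p) (hG : IsPGroup p G)
    (N : Subgroup G) (hN : N.Normal) :
    ⁅gammaSub N (p - 1), (⊤ : Subgroup G)⁆ ≤ ⁅gammaSub (⊤ : Subgroup G) (p - 1), N⁆ :=
  commutator_gammaSub_top_le hN (p - 1)
end
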